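/- Let gₖ be polynomials over ℂ of degree at most n such that for every z ∈ ℂ the sequence gₖ(z) is bounded. Then the coefficient sequences coeff(gₖ, i) are bounded for each 0 ≤ i ≤ n. -/

import Mathlib

open Polynomial

theorem coeffs_bounded_of_values_bounded
    (n : ℕ) (g : ℕ → Polynomial ℂ) (hg : ∀ k, (g k).natDegree ≤ n)
    (hbdd : ∀ z : ℂ, ∃ C : ℝ, ∀ k, ‖(g k).eval z‖ ≤ C) :
    ∀ i ≤ n, ∃ C : ℝ, ∀ k, ‖(g k).coeff i‖ ≤ C := by
  intro i _hi
  choose C hC using fun j : ℕ => hbdd (j : ℂ)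
  set s : Finset ℕ := Finset.range (n + 1) with hs
  have hv : Set.InjOn (fun j : ℕ => (j : ℂ)) s := fun a _ b _ h => Nat.cast_injective h
  refine ⟨∑ j ∈ s, C j * ‖(Lagrange.basis s (fun j : ℕ => (j : ℂ)) j).coeff i‖, fun k => ?_⟩
  have hdeg : (g k).degree < (s.card : WithBot ℕ) := by
    rw [hs, Finset.card_range]
    calc (g k).degree ≤ ((g k).natDegree : WithBot ℕ) := degree_le_natDegree
      _ < ((n + 1 : ℕ) : WithBot ℕ) := by exact_mod_cast Nat.lt_succ_of_le (hg k)
  have heq := Lagrange.eq_interpolate hv hdeg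
  have hco : (g k).coeff i = ∑ j ∈ s,
      (g k).eval ((j : ℕ) : ℂ) * (Lagrange.basis s (fun j : ℕ => (j : ℂ)) j).coeff i := by
    conv_lhs => rw [heq]
    rw [Lagrange.interpolate_apply, Polynomial.finset_sum_coeff]
    exact Finset.sum_congr rfl fun j _ => by rw [Polynomial.coeff_C_mul]
  rw [hco]
  calc ‖∑ j ∈ s, (g k).eval ((j : ℕ) : ℂ) *
        (Lagrange.basis s (fun j : ℕ => (j : ℂ)) j).coeff i‖
      ≤ ∑ j ∈ s, ‖(g k).eval ((j : ℕ) : ℂ) *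
        (Lagrange.basis s (fun j : ℕ => (j : ℂ)) j).coeff i‖ := by
        exact norm_sum_le _ _
    _ ≤ ∑ j ∈ s, C j * ‖(Lagrange.basis s (fun j : ℕ => (j : ℂ)) j).coeff i‖ := by
        refine Finset.sum_le_sum fun j _ => ?_
        rw [norm_mul]
        exact mul_le_mul_of_nonneg_right (hC j k) (norm_nonneg _)
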